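/- Let 𝔄 be a unital C*-algebra, 𝔛 a Hilbert 𝔄-module, and x₁,…,xₙ ∈ 𝔛. If there exist real numbers k₁,k₂ ≥ 0 and a vector e ∈ 𝔛 with |e| ≤ 1 (i.e. ⟨e,e⟩ ≤ 1 in 𝔄) such that k₁‖xⱼ‖ ≤ Re⟨e,xⱼ⟩ and k₂‖xⱼ‖ ≤ Im⟨e,xⱼ⟩ (as order inequalities in 𝔄, with the scalars identified with scalar multiples of the unit) for all 1 ≤ j ≤ n, then (k₁²+k₂²)^{1/2} ∑ⱼ‖xⱼ‖ ≤ ‖∑ⱼ xⱼ‖. -/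

import Mathlib

open scoped RightActions

/-- Hermitian real part of an element of a complex *-algebra. -/
noncomputable def cre {A : Type*} [Ring A] [StarRing A] [Module ℂ A] (a : A) : A :=
  (2 : ℂ)⁻¹ • (a + star a)

/-- Hermitian imaginary part of an element of a complex *-algebra. -/
noncomputable def cim {A : Type*} [Ring A] [StarRing A] [Module ℂ A] (a : A) : A :=
  (2 * Complex.I)⁻¹ • (a - star a)

/-- The Hilbert C⋆-module class as it stood in Mathlib of December 2024: a right `A`-module
(action of `Aᵐᵒᵖ`) with `⟪x, y <• a⟫ = ⟪x, y⟫ * a`. -/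
class OldCStarModule (A E : Type*) [NonUnitalSemiring A] [StarRing A]
    [Module ℂ A] [AddCommGroup E] [Module ℂ E] [PartialOrder A] [SMul Aᵐᵒᵖ E] [Norm A] [Norm E]
    extends Inner A E where
  inner_add_right {x} {y} {z} : inner x (y + z) = inner x y + inner x z
  inner_self_nonneg {x} : 0 ≤ inner x x
  inner_self {x} : inner x x = 0 ↔ x = 0
  inner_op_smul_right {a : A} {x y : E} : inner x (y <• a) = inner x y * a
  inner_smul_right_complex {z : ℂ} {x} {y} : inner x (z • y) = z • inner x y
  star_inner x y : star (inner x y) = inner y x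
  norm_eq_sqrt_norm_inner_self x : ‖x‖ = √‖inner x x‖

/-- Type synonym of `E` with conjugated scalar action and swapped inner product. -/
def OldConj (E : Type*) := E

/-- The identity map out of the type synonym. -/
@[reducible] def OldConj.toE {E : Type*} (x : OldConj E) : E := x

lemma old_inner_add_left {A E : Type*} [CStarAlgebra A] [PartialOrder A]
    [AddCommGroup E] [Module ℂ E] [SMul Aᵐᵒᵖ E] [Norm E] [OldCStarModule A E] (x y z : E) :
    inner A (x + y) z = inner A x z + inner A y z := by
  rw [← OldCStarModule.star_inner (A := A) z, OldCStarModule.inner_add_right (A := A),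
    star_add, OldCStarModule.star_inner (A := A), OldCStarModule.star_inner (A := A)]

lemma old_norm_nonneg {A E : Type*} [CStarAlgebra A] [PartialOrder A]
    [AddCommGroup E] [Module ℂ E] [SMul Aᵐᵒᵖ E] [Norm E] [OldCStarModule A E] (x : E) :
    0 ≤ ‖x‖ := by
  rw [OldCStarModule.norm_eq_sqrt_norm_inner_self (A := A) x]; exact Real.sqrt_nonneg _

lemma old_norm_sq_eq {A E : Type*} [CStarAlgebra A] [PartialOrder A]
    [AddCommGroup E] [Module ℂ E] [SMul Aᵐᵒᵖ E] [Norm E] [OldCStarModule A E] (x : E) :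
    ‖x‖ ^ 2 = ‖(inner A x x : A)‖ := by
  rw [OldCStarModule.norm_eq_sqrt_norm_inner_self (A := A) x, Real.sq_sqrt (norm_nonneg _)]

section OldConjSec

variable {A E : Type*} [CStarAlgebra A] [PartialOrder A]
    [AddCommGroup E] [Module ℂ E] [SMul Aᵐᵒᵖ E] [Norm E] [OldCStarModule A E]

instance : AddCommGroup (OldConj E) := inferInstanceAs (AddCommGroup E)

noncomputable instance : Module ℂ (OldConj E) :=
  Module.compHom E (starRingEnd ℂ)

instance : Norm (OldConj E) := inferInstanceAs (Norm E)

instance oldConjSMul : SMul A (OldConj E) :=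
  ⟨fun a y => (MulOpposite.op (star a) • OldConj.toE y : E)⟩

instance oldConjInner : Inner A (OldConj E) :=
  ⟨fun x y => inner A (OldConj.toE y) (OldConj.toE x)⟩

noncomputable instance oldConjCStar : CStarModule A (OldConj E) where
  inner_add_right {x y z} :=
    old_inner_add_left (A := A) (OldConj.toE y) (OldConj.toE z) (OldConj.toE x)
  inner_self_nonneg {x} := OldCStarModule.inner_self_nonneg (A := A) (x := OldConj.toE x)
  inner_self {x} := OldCStarModule.inner_self (A := A) (x := OldConj.toE x)
  inner_op_smul_right {a x y} := by
    show inner A (MulOpposite.op (star a) • OldConj.toE y) (OldConj.toE x)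
      = a * inner A (OldConj.toE y) (OldConj.toE x)
    rw [← OldCStarModule.star_inner (A := A) (OldConj.toE x), OldCStarModule.inner_op_smul_right,
      star_mul, star_star, OldCStarModule.star_inner (A := A)]
  inner_smul_right_complex {z x y} := by
    show inner A ((starRingEnd ℂ z) • OldConj.toE y) (OldConj.toE x)
      = z • inner A (OldConj.toE y) (OldConj.toE x)
    rw [← OldCStarModule.star_inner (A := A) (OldConj.toE x),
      OldCStarModule.inner_smul_right_complex, star_smul, OldCStarModule.star_inner (A := A)]
    simp
  star_inner x y := OldCStarModule.star_inner (A := A) (OldConj.toE y) (OldConj.toE x)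
  norm_eq_sqrt_norm_inner_self x :=
    OldCStarModule.norm_eq_sqrt_norm_inner_self (A := A) (OldConj.toE x)

lemma old_norm_inner_le [StarOrderedRing A] (x y : E) :
    ‖(inner A x y : A)‖ ≤ ‖x‖ * ‖y‖ := by
  have := CStarModule.norm_inner_le (A := A) (OldConj E) (x := (y : OldConj E))
    (y := (x : OldConj E))
  rw [mul_comm]; exact this

lemma old_inner_sum_right {ι : Type*} (s : Finset ι) (x : E) (y : ι → E) :
    inner A x (∑ i ∈ s, y i) = ∑ i ∈ s, inner A x (y i) :=
  CStarModule.inner_sum_left (A := A) (E := OldConj E) (s := s) (x := y) (y := (x : OldConj E))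

end OldConjSec

lemma cre_sum {A : Type*} [Ring A] [StarRing A] [Module ℂ A] {ι : Type*} (s : Finset ι)
    (f : ι → A) : cre (∑ j ∈ s, f j) = ∑ j ∈ s, cre (f j) := by
  simp [cre, star_sum, Finset.sum_add_distrib, Finset.smul_sum]

lemma cim_sum {A : Type*} [Ring A] [StarRing A] [Module ℂ A] {ι : Type*} (s : Finset ι)
    (f : ι → A) : cim (∑ j ∈ s, f j) = ∑ j ∈ s, cim (f j) := by
  rw [cim, star_sum, ← Finset.sum_sub_distrib, Finset.smul_sum]
  rfl

lemma norm_cre_le {A : Type*} [NormedRing A] [StarRing A] [NormedAlgebra ℂ A]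
    [NormedStarGroup A] (a : A) : ‖cre a‖ ≤ ‖a‖ := by
  calc ‖cre a‖ ≤ ‖(2:ℂ)⁻¹‖ * ‖a + star a‖ := norm_smul_le _ _
    _ ≤ ‖(2:ℂ)⁻¹‖ * (‖a‖ + ‖star a‖) := by
        gcongr; exact norm_add_le _ _
    _ = ‖a‖ := by rw [norm_star]; simp; ring

theorem stmt0 {A E : Type*} [CStarAlgebra A] [PartialOrder A] [StarOrderedRing A]
    [AddCommGroup E] [Module ℂ E] [SMul Aᵐᵒᵖ E] [Norm E] [OldCStarModule A E]
    (n : ℕ) (x : Fin n → E) (e : E) (he : (inner A e e : A) ≤ 1)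
    (k₁ k₂ : ℝ) (hk₁ : 0 ≤ k₁) (hk₂ : 0 ≤ k₂)
    (h₁ : ∀ j, (k₁ * ‖x j‖) • (1 : A) ≤ cre (inner A e (x j) : A))
    (h₂ : ∀ j, (k₂ * ‖x j‖) • (1 : A) ≤ cim (inner A e (x j) : A)) :
    Real.sqrt (k₁ ^ 2 + k₂ ^ 2) * ∑ j, ‖x j‖ ≤ ‖∑ j, x j‖ := by
  have hT : (0:ℝ) ≤ ∑ j, ‖x j‖ :=
    Finset.sum_nonneg fun j _ => old_norm_nonneg (A := A) _
  have hS : (0:ℝ) ≤ ‖∑ j, x j‖ := old_norm_nonneg (A := A) _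
  set T : ℝ := ∑ j, ‖x j‖ with hTdef
  set S : E := ∑ j, x j with hSdef
  set a : A := inner A e S with hadef
  rcases subsingleton_or_nontrivial A with hA | hA
  · have hx : ∀ j, ‖x j‖ = 0 := fun j => by
      rw [OldCStarModule.norm_eq_sqrt_norm_inner_self (A := A),
        Subsingleton.elim ((inner A (x j) (x j)) : A) 0]
      simp
    have : T = 0 := Finset.sum_eq_zero fun j _ => hx j
    rw [this, mul_zero]
    exact hS
  -- nontrivial case
  have hea : ‖a‖ ≤ ‖S‖ := by
    calc ‖a‖ ≤ ‖e‖ * ‖S‖ := old_norm_inner_le (A := A) e S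
      _ ≤ 1 * ‖S‖ := by
          gcongr
          have h1 : ‖(inner A e e : A)‖ ≤ 1 :=
            (CStarAlgebra.norm_le_one_iff_of_nonneg _ OldCStarModule.inner_self_nonneg).mpr he
          have h2 : ‖e‖ ^ 2 = ‖(inner A e e : A)‖ := old_norm_sq_eq (A := A) e
          nlinarith [old_norm_nonneg (A := A) e]
      _ = ‖S‖ := one_mul _
  have hinner_sum : a = ∑ j, (inner A e (x j) : A) := by
    rw [hadef, hSdef, old_inner_sum_right]
  have hsum1 : (k₁ * T) • (1 : A) ≤ cre a := by
    rw [hinner_sum, cre_sum, hTdef, Finset.mul_sum, Finset.sum_smul]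
    exact Finset.sum_le_sum fun j _ => h₁ j
  have hsum2 : (k₂ * T) • (1 : A) ≤ cim a := by
    rw [hinner_sum, cim_sum, hTdef, Finset.mul_sum, Finset.sum_smul]
    exact Finset.sum_le_sum fun j _ => h₂ j
  set c : ℂ := (k₁ : ℂ) - k₂ * Complex.I with hcdef
  have hkey : k₁ • cre a + k₂ • cim a = cre (c • a) := by
    rw [cre, cim, cre, star_smul, hcdef]
    match_scalars <;>
      simp [Complex.ext_iff, div_eq_mul_inv, mul_comm]
  have hscale : ((k₁ ^ 2 + k₂ ^ 2) * T) • (1 : A) ≤ cre (c • a) := by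
    rw [← hkey]
    have e1 : ((k₁ ^ 2 + k₂ ^ 2) * T) • (1 : A)
        = k₁ • ((k₁ * T) • (1 : A)) + k₂ • ((k₂ * T) • (1 : A)) := by
      rw [smul_smul, smul_smul, ← add_smul]; ring_nf
    rw [e1]
    exact add_le_add (smul_le_smul_of_nonneg_left hsum1 hk₁)
      (smul_le_smul_of_nonneg_left hsum2 hk₂)
  have hnonneg : (0 : A) ≤ ((k₁ ^ 2 + k₂ ^ 2) * T) • (1 : A) :=
    smul_nonneg (mul_nonneg (by positivity) hT) zero_le_one
  have hnorm1 : (k₁ ^ 2 + k₂ ^ 2) * T ≤ ‖cre (c • a)‖ := by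
    calc (k₁ ^ 2 + k₂ ^ 2) * T = ‖((k₁ ^ 2 + k₂ ^ 2) * T) • (1 : A)‖ := by
          rw [norm_smul, norm_one, mul_one, Real.norm_eq_abs,
            abs_of_nonneg (mul_nonneg (by positivity) hT)]
      _ ≤ ‖cre (c • a)‖ :=
          CStarAlgebra.norm_le_norm_of_nonneg_of_le hnonneg hscale
  have hc : ‖c‖ = Real.sqrt (k₁ ^ 2 + k₂ ^ 2) := by
    rw [hcdef, Complex.norm_def, Complex.normSq_apply]
    simp
    congr 1
    ring
  have hnorm2 : ‖cre (c • a)‖ ≤ Real.sqrt (k₁ ^ 2 + k₂ ^ 2) * ‖S‖ := by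
    calc ‖cre (c • a)‖ ≤ ‖c • a‖ := norm_cre_le _
      _ = ‖c‖ * ‖a‖ := norm_smul _ _
      _ ≤ Real.sqrt (k₁ ^ 2 + k₂ ^ 2) * ‖S‖ := by rw [hc]; gcongr
  have h := hnorm1.trans hnorm2
  have hsq : Real.sqrt (k₁ ^ 2 + k₂ ^ 2) ^ 2 = k₁ ^ 2 + k₂ ^ 2 :=
    Real.sq_sqrt (by positivity)
  rcases eq_or_lt_of_le (Real.sqrt_nonneg (k₁ ^ 2 + k₂ ^ 2)) with hs0 | hs0
  · rw [← hs0, zero_mul]; exact hS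
  · rw [← hsq] at h
    nlinarith [hs0, h, hS, hT]
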